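/- Let B ∈ ℝ^{n×n} be symmetric positive definite, let x, x' ∈ ℝⁿ with s := x' − x ≠ 0, let λ ∈ Δ_m, and set y := Σ_{i=1}^m λ_i (∇f_i(x') − ∇f_i(x)). Suppose Σ_{i=1}^m λ_i (f_i(x) − f_i(x')) > 0, and define η := yᵀs/‖s‖², m̂ := max(−η, 0) + Σ_{i=1}^m λ_i (f_i(x) − f_i(x')), and γ := y + m̂ s. Then γᵀs ≥ (Σ_{i=1}^m λ_i (f_i(x) − f_i(x'))) · ‖s‖² > 0, and the BFGS-type update B⁺ = B − (B s sᵀ B)/(sᵀ B s) + (γ γᵀ)/(γᵀ s) is symmetric positive definite. -/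

import Mathlib

open RealInnerProductSpace Matrix

noncomputable section

abbrev E (n : ℕ) := EuclideanSpace ℝ (Fin n)

def quad {n : ℕ} (B : Matrix (Fin n) (Fin n) ℝ) (d : E n) : ℝ :=
  ∑ i, ∑ j, d i * B i j * d j

def outer {n : ℕ} (u v : E n) : Matrix (Fin n) (Fin n) ℝ :=
  Matrix.of fun i j => u i * v j

def bfgsUpdate {n : ℕ} (B : Matrix (Fin n) (Fin n) ℝ) (s γ : E n) :
    Matrix (Fin n) (Fin n) ℝ :=
  B - (quad B s)⁻¹ • (B * outer s s * B) + (⟪γ, s⟫)⁻¹ • outer γ γ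

lemma quad_eq_dot {n : ℕ} (B : Matrix (Fin n) (Fin n) ℝ) (d : E n) :
    quad B d = (d : Fin n → ℝ) ⬝ᵥ B *ᵥ d := by
  simp [quad, Matrix.mulVec, dotProduct, Finset.mul_sum, mul_assoc]

lemma outer_mulVec {n : ℕ} (u v : E n) (w : Fin n → ℝ) :
    (outer u v) *ᵥ w = (v ⬝ᵥ w) • (u : Fin n → ℝ) := by
  funext i
  show ∑ j, outer u v i j * w j = (v ⬝ᵥ w) * u i
  simp only [outer, Matrix.of_apply, dotProduct, Finset.sum_mul]
  exact Finset.sum_congr rfl fun j _ => by ring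

lemma inner_eq_dot {n : ℕ} (u v : E n) : ⟪u, v⟫ = (u : Fin n → ℝ) ⬝ᵥ v := by
  simp [PiLp.inner_apply, dotProduct, mul_comm]

lemma outer_isHermitian {n : ℕ} (u : E n) : (outer u u).IsHermitian := by
  refine Matrix.IsHermitian.ext fun i j => ?_
  simp [outer, mul_comm]

/-- positivity of γᵀs and positive definiteness of the BFGS-type update. -/
theorem stmt8 {n m : ℕ} [NeZero m] (f : Fin m → E n → ℝ)
    (hf : ∀ i, ContDiff ℝ 1 (f i))
    (B : Matrix (Fin n) (Fin n) ℝ) (hB : B.PosDef)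
    (x x' s : E n) (hs : s = x' - x) (hs0 : s ≠ 0)
    (lam : Fin m → ℝ) (hlam : lam ∈ stdSimplex ℝ (Fin m))
    (y : E n) (hy : y = ∑ i, lam i • (gradient (f i) x' - gradient (f i) x))
    (hdec : 0 < ∑ i, lam i * (f i x - f i x'))
    (η : ℝ) (hη : η = ⟪y, s⟫ / ‖s‖ ^ 2)
    (mh : ℝ) (hmh : mh = max (-η) 0 + ∑ i, lam i * (f i x - f i x'))
    (γ : E n) (hγ : γ = y + mh • s) :
    (∑ i, lam i * (f i x - f i x')) * ‖s‖ ^ 2 ≤ ⟪γ, s⟫ ∧ 0 < ⟪γ, s⟫ ∧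
      (bfgsUpdate B s γ).PosDef := by
  have hsn : (0:ℝ) < ‖s‖ ^ 2 := by
    have : 0 < ‖s‖ := norm_pos_iff.mpr hs0
    positivity
  set c := ∑ i, lam i * (f i x - f i x') with hc
  have hys : ⟪y, s⟫ = η * ‖s‖ ^ 2 := by
    rw [hη]; field_simp
  have hgs : ⟪γ, s⟫ = (η + max (-η) 0 + c) * ‖s‖ ^ 2 := by
    rw [hγ, inner_add_left, real_inner_smul_left, real_inner_self_eq_norm_sq, hys, hmh]; ring
  have hmax : 0 ≤ η + max (-η) 0 := by
    have := le_max_left (-η) 0; linarith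
  have h1 : c * ‖s‖ ^ 2 ≤ ⟪γ, s⟫ := by
    rw [hgs]; nlinarith
  have h2 : 0 < ⟪γ, s⟫ := lt_of_lt_of_le (mul_pos hdec hsn) h1
  refine ⟨h1, h2, ?_⟩
  -- notation
  have hBH : Bᴴ = B := hB.1
  have hBt : Bᵀ = B := by
    rw [← Matrix.conjTranspose_eq_transpose_of_trivial]; exact hBH
  -- symmetry of the bilinear form
  have hsym : ∀ u v : Fin n → ℝ, u ⬝ᵥ B *ᵥ v = v ⬝ᵥ B *ᵥ u := by
    intro u v
    rw [Matrix.dotProduct_mulVec, ← Matrix.mulVec_transpose, hBt, dotProduct_comm]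
  -- positivity of quadratic form
  have hq : ∀ d : Fin n → ℝ, d ≠ 0 → 0 < d ⬝ᵥ B *ᵥ d := by
    intro d hd
    simpa using hB.dotProduct_mulVec_pos hd
  set σ := quad B s with hσdef
  have hσ : 0 < σ := by
    rw [hσdef, quad_eq_dot]
    exact hq s (by simpa using hs0)
  set t := ⟪γ, s⟫ with htdef
  have hγsdot : (γ : Fin n → ℝ) ⬝ᵥ s = t := (inner_eq_dot γ s).symm
  refine Matrix.PosDef.of_dotProduct_mulVec_pos ?_ ?_
  · -- Hermitian
    refine ((hB.1.sub ?_).add ?_)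
    · have := Matrix.isHermitian_conjTranspose_mul_mul B (outer_isHermitian s)
      rw [hBH] at this
      have h2 : (B * outer s s * B).IsHermitian := this
      show (σ⁻¹ • (B * outer s s * B)).IsHermitian
      unfold Matrix.IsHermitian
      rw [Matrix.conjTranspose_smul, star_trivial, h2.eq]
    · show ((t⁻¹ : ℝ) • outer γ γ).IsHermitian
      unfold Matrix.IsHermitian
      rw [Matrix.conjTranspose_smul, star_trivial, (outer_isHermitian γ).eq]
  · intro d hd
    simp only [star_trivial]
    -- compute the quadratic form
    set p := d ⬝ᵥ B *ᵥ s with hp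
    set g := (γ : Fin n → ℝ) ⬝ᵥ d with hg
    have hform : d ⬝ᵥ (bfgsUpdate B s γ) *ᵥ d
        = d ⬝ᵥ B *ᵥ d - σ⁻¹ * p ^ 2 + t⁻¹ * g ^ 2 := by
      unfold bfgsUpdate
      rw [← hσdef, ← htdef]
      rw [Matrix.add_mulVec, Matrix.sub_mulVec, Matrix.smul_mulVec,
        Matrix.smul_mulVec, dotProduct_add, dotProduct_sub,
        dotProduct_smul, dotProduct_smul]
      have hmid : d ⬝ᵥ (B * outer s s * B) *ᵥ d = p ^ 2 := by
        rw [← Matrix.mulVec_mulVec, ← Matrix.mulVec_mulVec, outer_mulVec,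
          Matrix.mulVec_smul, dotProduct_smul]
        have : (s : Fin n → ℝ) ⬝ᵥ B *ᵥ d = p := hsym s d
        rw [this]
        show p * (d ⬝ᵥ B *ᵥ s) = p ^ 2
        rw [← hp]; ring
      have hout : d ⬝ᵥ (outer γ γ) *ᵥ d = g ^ 2 := by
        rw [outer_mulVec, dotProduct_smul]
        show ((γ : Fin n → ℝ) ⬝ᵥ d) * (d ⬝ᵥ γ) = g ^ 2
        rw [dotProduct_comm d γ, ← hg]; ring
      rw [hmid, hout]
      simp only [smul_eq_mul]
    rw [hform]
    set sf : Fin n → ℝ := s.ofLp with hsf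
    have hss : sf ⬝ᵥ B *ᵥ sf = σ := by
      rw [hsf, ← quad_eq_dot]
    by_cases hw : d = (p / σ) • sf
    · -- d is a multiple of s
      have hps : p / σ ≠ 0 := by
        intro h0
        rw [h0, zero_smul] at hw
        exact hd hw
      have hpd : d ⬝ᵥ B *ᵥ d = (p / σ) ^ 2 * σ := by
        rw [hw, smul_dotProduct, Matrix.mulVec_smul, dotProduct_smul, hss]
        simp only [smul_eq_mul]
        ring
      have hgd : g = (p / σ) * t := by
        rw [hg, hw, dotProduct_smul, hγsdot]
        simp only [smul_eq_mul]
      rw [hpd, hgd]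
      have e1 : (p / σ) ^ 2 * σ - σ⁻¹ * p ^ 2 + t⁻¹ * ((p / σ) * t) ^ 2
          = (p / σ) ^ 2 * t := by
        field_simp
        ring
      rw [e1]
      have hsq : 0 < (p / σ) ^ 2 :=
        lt_of_le_of_ne (sq_nonneg _) (Ne.symm (pow_ne_zero 2 hps))
      exact mul_pos hsq h2
    · -- d not a multiple of s : strict Cauchy–Schwarz via w
      set w : Fin n → ℝ := d - (p / σ) • sf with hwdef
      have hw0 : w ≠ 0 := by
        intro h0
        apply hw
        exact sub_eq_zero.mp h0
      have hqw : 0 < w ⬝ᵥ B *ᵥ w := hq w hw0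
      have hexp : w ⬝ᵥ B *ᵥ w = d ⬝ᵥ B *ᵥ d - σ⁻¹ * p ^ 2 := by
        have h4 : sf ⬝ᵥ B *ᵥ d = p := hsym sf d
        rw [hwdef]
        simp only [sub_dotProduct, Matrix.mulVec_sub, dotProduct_sub,
          smul_dotProduct, Matrix.mulVec_smul, dotProduct_smul,
          smul_eq_mul]
        rw [h4, hss, ← hp]
        field_simp
        ring
      have hg2 : 0 ≤ t⁻¹ * g ^ 2 := by positivity
      linarith [hexp ▸ hqw]
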